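/- For ℚ-vector spaces U and U', the map induced by multiplication in E⁻¹O_F gives an isomorphism of O_F-modules (E⁻¹O_F ⊗_ℚ U) ⊗_{O_F} (E⁻¹O_F ⊗_ℚ U') ≅ E⁻¹O_F ⊗_ℚ (U ⊗_ℚ U'). -/

import Mathlib

open LaurentPolynomial

noncomputable section

/-- The ring `O_F = ∏_{n ≥ 1} ℚ[c_n]`. -/
abbrev OF : Type := ∀ _ : ℕ+, Polynomial ℚ

/-- The product of Laurent polynomial rings `∏_{n ≥ 1} ℚ[c_n, c_n⁻¹]`. -/
abbrev LF : Type := ∀ _ : ℕ+, LaurentPolynomial ℚ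

/-- The subring of `ℚ[c,c⁻¹]` of Laurent polynomials with no negative-degree terms. -/
def polyRange : Subring (LaurentPolynomial ℚ) :=
  (Polynomial.toLaurent (R := ℚ)).range

/-- `E⁻¹O_F` : sequences of Laurent polynomials which are polynomial at all but
finitely many indices. -/
def EinvOF : Subring LF where
  carrier := {f : LF | {n : ℕ+ | f n ∉ polyRange}.Finite}
  zero_mem' := by
    refine Set.finite_empty.subset fun n hn => ?_
    simp only [Set.mem_setOf_eq, Pi.zero_apply] at hn
    exact hn (zero_mem _)
  one_mem' := by
    refine Set.finite_empty.subset fun n hn => ?_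
    simp only [Set.mem_setOf_eq, Pi.one_apply] at hn
    exact hn (one_mem _)
  add_mem' := by
    intro a b ha hb
    refine (ha.union hb).subset fun n hn => ?_
    simp only [Set.mem_setOf_eq, Pi.add_apply] at hn
    by_contra h
    simp only [Set.mem_union, Set.mem_setOf_eq, not_or, not_not] at h
    exact hn (add_mem h.1 h.2)
  mul_mem' := by
    intro a b ha hb
    refine (ha.union hb).subset fun n hn => ?_
    simp only [Set.mem_setOf_eq, Pi.mul_apply] at hn
    by_contra h
    simp only [Set.mem_union, Set.mem_setOf_eq, not_or, not_not] at h
    exact hn (mul_mem h.1 h.2)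
  neg_mem' := by
    intro a ha
    refine ha.subset fun n hn => ?_
    simp only [Set.mem_setOf_eq, Pi.neg_apply] at hn
    simp only [Set.mem_setOf_eq]
    exact fun h => hn (neg_mem h)

lemma jFull_mem (f : OF) :
    (fun n => Polynomial.toLaurent (f n) : LF) ∈ EinvOF := by
  refine Set.finite_empty.subset fun n hn => ?_
  exact hn ⟨f n, rfl⟩

/-- The evident ring homomorphism `j : O_F → E⁻¹O_F`. -/
def j : OF →+* EinvOF :=
  (Pi.ringHom fun n => (Polynomial.toLaurent (R := ℚ)).comp (Pi.evalRingHom _ n)).codRestrict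
    EinvOF (fun f => jFull_mem f)

/-- `E⁻¹O_F` regarded as a `ℚ`-subalgebra of `∏_{n≥1} ℚ[c_n,c_n⁻¹]` (same carrier as the
subring `EinvOF`), so that it carries a `ℚ`-vector space structure. -/
def EinvOFalg : Subalgebra ℚ LF :=
  { EinvOF.toSubsemiring with
    algebraMap_mem' := fun q => by
      refine Set.finite_empty.subset fun n hn => ?_
      exact hn ⟨Polynomial.C q, by
        simp only [Polynomial.toLaurent_C, Pi.algebraMap_apply, C_eq_algebraMap]⟩ }

set_option synthInstance.maxHeartbeats 1000000
set_option maxHeartbeats 1000000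

/-- The evident ring homomorphism `j : O_F → E⁻¹O_F`, with target the `ℚ`-subalgebra model. -/
def jA : OF →+* EinvOFalg :=
  (Pi.ringHom fun n => (Polynomial.toLaurent (R := ℚ)).comp (Pi.evalRingHom _ n)).codRestrict
    EinvOFalg (fun f => jFull_mem f)

/-- `E⁻¹O_F` is an `O_F`-algebra (hence an `O_F`-module) via `j`. -/
instance : Algebra OF EinvOFalg := jA.toAlgebra

instance : SMulCommClass ℚ OF EinvOFalg :=
  ⟨fun q r x => by
    rw [Algebra.smul_def r x, Algebra.smul_def r (q • x)]
    exact (mul_smul_comm q _ x).symm⟩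

open TensorProduct

/-!
STATEMENT 8: For `ℚ`-vector spaces `U` and `U'`, multiplication in `E⁻¹O_F` induces an
isomorphism of `O_F`-modules
`(E⁻¹O_F ⊗_ℚ U) ⊗_{O_F} (E⁻¹O_F ⊗_ℚ U') ≅ E⁻¹O_F ⊗_ℚ (U ⊗_ℚ U')`,
where `E⁻¹O_F ⊗_ℚ U` is an `O_F`-module via the first factor.
-/


section Aux

variable {U U' : Type} [AddCommGroup U] [Module ℚ U] [AddCommGroup U'] [Module ℚ U']

lemma smul_jA_def (c : OF) (a : EinvOFalg) : c • a = jA c * a := rfl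

/-- Every element of `E⁻¹O_F` is of the form `j p * u` where `u` is the inverse of
a unit `j e`. -/
lemma exists_rep (b : EinvOFalg) :
    ∃ (e p : OF) (u : EinvOFalg), jA e * u = 1 ∧ b * jA e = jA p := by
  have hb : {n : ℕ+ | (b : LF) n ∉ polyRange}.Finite := b.2
  have hd : ∀ n : ℕ+, ∃ d : ℕ, ((b : LF) n * T (d : ℤ) ∈ polyRange) ∧
      ((b : LF) n ∈ polyRange → d = 0) := by
    intro n
    by_cases h : (b : LF) n ∈ polyRange
    · refine ⟨0, ?_, fun _ => rfl⟩
      simpa [T_zero] using h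
    · obtain ⟨d, f', hf⟩ := LaurentPolynomial.exists_T_pow ((b : LF) n)
      exact ⟨d, ⟨f', hf⟩, fun hmem => absurd hmem h⟩
  choose d hd1 hd2 using hd
  have hpspec : ∀ n, Polynomial.toLaurent ((hd1 _).choose) = (b : LF) n * T (d n : ℤ) :=
    fun n => (hd1 n).choose_spec
  have humem : (fun n => T (-(d n : ℤ)) : LF) ∈ EinvOFalg := by
    show {n : ℕ+ | T (-(d n : ℤ)) ∉ polyRange}.Finite
    refine hb.subset fun n hn => ?_
    simp only [Set.mem_setOf_eq] at hn ⊢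
    intro hbn
    apply hn
    rw [hd2 n hbn]
    simpa [T_zero] using (one_mem polyRange)
  refine ⟨fun n => Polynomial.X ^ d n, fun n => (hd1 n).choose, ⟨_, humem⟩, ?_, ?_⟩
  · refine Subtype.ext (funext fun n => ?_)
    have h1 : ((jA (fun n => Polynomial.X ^ d n) * (⟨_, humem⟩ : EinvOFalg) : EinvOFalg) : LF) n
        = Polynomial.toLaurent (Polynomial.X ^ d n) * T (-(d n : ℤ)) := rfl
    have h2 : (((1 : EinvOFalg)) : LF) n = 1 := rfl
    rw [h1, h2, Polynomial.toLaurent_X_pow, ← T_add]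
    simp [T_zero]
  · refine Subtype.ext (funext fun n => ?_)
    have h1 : ((b * jA (fun n => Polynomial.X ^ d n) : EinvOFalg) : LF) n
        = (b : LF) n * Polynomial.toLaurent (Polynomial.X ^ d n) := rfl
    have h2 : ((jA (fun n => (hd1 n).choose) : EinvOFalg) : LF) n
        = Polynomial.toLaurent ((hd1 n).choose) := rfl
    rw [h1, h2, Polynomial.toLaurent_X_pow, hpspec n]

lemma of_smul_tensor {X : Type} [AddCommGroup X] [Module ℚ X] (c : OF)
    (z : EinvOFalg ⊗[ℚ] X) : c • z = jA c • z := by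
  induction z using TensorProduct.induction_on with
  | zero => simp
  | tmul a v =>
      rw [TensorProduct.smul_tmul', TensorProduct.smul_tmul', smul_jA_def, smul_eq_mul]
  | add x y hx hy => rw [smul_add, smul_add, hx, hy]

set_option maxHeartbeats 4000000 in
lemma key_balanced (b : EinvOFalg) (x : EinvOFalg ⊗[ℚ] U) (y : EinvOFalg ⊗[ℚ] U') :
    (b • x) ⊗ₜ[OF] y = x ⊗ₜ[OF] (b • y) := by
  obtain ⟨e, p, u, hu, hbe⟩ := exists_rep b
  have hbu : b = jA p * u := by
    have h := congrArg (· * u) hbe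
    simpa [mul_assoc, hu] using h
  have heu : ∀ {X : Type} [AddCommGroup X] [Module ℚ X] (z : EinvOFalg ⊗[ℚ] X),
      e • (u • z) = z := by
    intro X _ _ z
    rw [of_smul_tensor, smul_smul, hu, one_smul]
  have hbx : ∀ {X : Type} [AddCommGroup X] [Module ℚ X] (z : EinvOFalg ⊗[ℚ] X),
      b • z = p • (u • z) := by
    intro X _ _ z
    rw [of_smul_tensor, hbu, mul_smul, ← of_smul_tensor]
  have hswap : ∀ {X : Type} [AddCommGroup X] [Module ℚ X] (z : EinvOFalg ⊗[ℚ] X),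
      u • (p • z) = p • (u • z) := by
    intro X _ _ z
    rw [of_smul_tensor p, smul_smul, mul_comm, ← smul_smul, ← of_smul_tensor]
  have keyu : ∀ (x : EinvOFalg ⊗[ℚ] U) (y : EinvOFalg ⊗[ℚ] U'),
      (u • x) ⊗ₜ[OF] y = x ⊗ₜ[OF] (u • y) := by
    intro x y
    calc (u • x) ⊗ₜ[OF] y = (u • x) ⊗ₜ[OF] (e • (u • y)) := by rw [heu]
      _ = (e • (u • x)) ⊗ₜ[OF] (u • y) := (TensorProduct.smul_tmul e (u • x) (u • y)).symm
      _ = x ⊗ₜ[OF] (u • y) := by rw [heu]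
  calc (b • x) ⊗ₜ[OF] y = (p • (u • x)) ⊗ₜ[OF] y := by rw [hbx]
    _ = (u • x) ⊗ₜ[OF] (p • y) := TensorProduct.smul_tmul p (u • x) y
    _ = x ⊗ₜ[OF] (u • (p • y)) := keyu x (p • y)
    _ = x ⊗ₜ[OF] (p • (u • y)) := by rw [hswap]
    _ = x ⊗ₜ[OF] (b • y) := by rw [← hbx]

/-- The base-change equivalence `(E ⊗ U) ⊗[E] (E ⊗ U') ≃ E ⊗ (U ⊗ U')`. -/
def Gmul : (EinvOFalg ⊗[ℚ] U) ⊗[EinvOFalg] (EinvOFalg ⊗[ℚ] U') ≃ₗ[EinvOFalg]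
    EinvOFalg ⊗[ℚ] (U ⊗[ℚ] U') :=
  (TensorProduct.AlgebraTensorModule.cancelBaseChange ℚ EinvOFalg EinvOFalg
      (EinvOFalg ⊗[ℚ] U) U') ≪≫ₗ
    (TensorProduct.AlgebraTensorModule.assoc ℚ ℚ EinvOFalg EinvOFalg U U')

lemma Gmul_tmul (a b : EinvOFalg) (v : U) (v' : U') :
    Gmul ((a ⊗ₜ[ℚ] v) ⊗ₜ[EinvOFalg] (b ⊗ₜ[ℚ] v')) = (a * b) ⊗ₜ[ℚ] (v ⊗ₜ[ℚ] v') := by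
  simp only [Gmul, LinearEquiv.trans_apply,
    TensorProduct.AlgebraTensorModule.cancelBaseChange_tmul,
    TensorProduct.smul_tmul', smul_eq_mul,
    TensorProduct.AlgebraTensorModule.assoc_tmul]
  rw [mul_comm b a]

lemma Gmul_symm_tmul (a : EinvOFalg) (v : U) (v' : U') :
    (Gmul (U := U) (U' := U')).symm (a ⊗ₜ[ℚ] (v ⊗ₜ[ℚ] v'))
      = (a ⊗ₜ[ℚ] v) ⊗ₜ[EinvOFalg] ((1 : EinvOFalg) ⊗ₜ[ℚ] v') := by
  rw [LinearEquiv.symm_apply_eq, Gmul_tmul, mul_one]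

/-- The additive map from the `E`-tensor product back to the `O_F`-tensor product. -/
def backAdd : (EinvOFalg ⊗[ℚ] U) ⊗[EinvOFalg] (EinvOFalg ⊗[ℚ] U') →+
    (EinvOFalg ⊗[ℚ] U) ⊗[OF] (EinvOFalg ⊗[ℚ] U') :=
  TensorProduct.liftAddHom
    { toFun := fun x =>
        { toFun := fun y => x ⊗ₜ[OF] y
          map_zero' := TensorProduct.tmul_zero _ x
          map_add' := fun y1 y2 => TensorProduct.tmul_add x y1 y2 }
      map_zero' := AddMonoidHom.ext fun y => TensorProduct.zero_tmul _ y
      map_add' := fun x1 x2 => AddMonoidHom.ext fun y => TensorProduct.add_tmul x1 x2 y }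
    (fun b x y => key_balanced b x y)

@[simp] lemma backAdd_tmul (x : EinvOFalg ⊗[ℚ] U) (y : EinvOFalg ⊗[ℚ] U') :
    backAdd (x ⊗ₜ[EinvOFalg] y) = x ⊗ₜ[OF] y :=
  TensorProduct.liftAddHom_tmul _ _ x y

set_option maxHeartbeats 4000000 in
lemma backAdd_Esmul (c : OF) (w : (EinvOFalg ⊗[ℚ] U) ⊗[EinvOFalg] (EinvOFalg ⊗[ℚ] U')) :
    backAdd (jA c • w) = c • backAdd w := by
  induction w using TensorProduct.induction_on with
  | zero => simp
  | tmul x y =>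
      rw [TensorProduct.smul_tmul' (jA c) x y, backAdd_tmul, backAdd_tmul,
        ← of_smul_tensor c x]
      exact (TensorProduct.smul_tmul' c x y).symm
  | add w1 w2 h1 h2 => rw [smul_add, map_add, map_add, h1, h2, smul_add]

/-- The backward `O_F`-linear map. -/
def bwd : EinvOFalg ⊗[ℚ] (U ⊗[ℚ] U') →ₗ[OF]
    (EinvOFalg ⊗[ℚ] U) ⊗[OF] (EinvOFalg ⊗[ℚ] U') where
  toFun z := backAdd ((Gmul (U := U) (U' := U')).symm z)
  map_add' z1 z2 := by rw [map_add, map_add]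
  map_smul' c z := by
    dsimp only [RingHom.id_apply]
    rw [of_smul_tensor, map_smul, backAdd_Esmul]

@[simp] lemma bwd_apply (z : EinvOFalg ⊗[ℚ] (U ⊗[ℚ] U')) :
    bwd z = backAdd ((Gmul (U := U) (U' := U')).symm z) := rfl

set_option maxHeartbeats 4000000 in
/-- The forward `O_F`-bilinear map. -/
def bilMul : (EinvOFalg ⊗[ℚ] U) →ₗ[OF] (EinvOFalg ⊗[ℚ] U') →ₗ[OF]
    EinvOFalg ⊗[ℚ] (U ⊗[ℚ] U') where
  toFun x :=
    { toFun := fun y => Gmul (x ⊗ₜ[EinvOFalg] y)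
      map_add' := fun y1 y2 => by
        rw [TensorProduct.tmul_add, map_add]
      map_smul' := fun c y => by
        dsimp only [RingHom.id_apply]
        rw [of_smul_tensor c y, TensorProduct.tmul_smul, map_smul, ← of_smul_tensor] }
  map_add' x1 x2 := LinearMap.ext fun y => by
    simp only [LinearMap.coe_mk, AddHom.coe_mk, LinearMap.add_apply]
    rw [TensorProduct.add_tmul, map_add]
  map_smul' c x := LinearMap.ext fun y => by
    simp only [LinearMap.coe_mk, AddHom.coe_mk, RingHom.id_apply, LinearMap.smul_apply]
    rw [of_smul_tensor c x, ← TensorProduct.smul_tmul' (jA c) x y, map_smul, ← of_smul_tensor]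

/-- The forward `O_F`-linear map. -/
def fwd : (EinvOFalg ⊗[ℚ] U) ⊗[OF] (EinvOFalg ⊗[ℚ] U') →ₗ[OF]
    EinvOFalg ⊗[ℚ] (U ⊗[ℚ] U') :=
  TensorProduct.lift bilMul

@[simp] lemma fwd_tmul (x : EinvOFalg ⊗[ℚ] U) (y : EinvOFalg ⊗[ℚ] U') :
    fwd (x ⊗ₜ[OF] y) = Gmul (x ⊗ₜ[EinvOFalg] y) :=
  TensorProduct.lift.tmul x y

end Aux

set_option synthInstance.maxHeartbeats 1000000 in
set_option maxHeartbeats 1000000 in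
theorem stmt8 (U U' : Type) [AddCommGroup U] [Module ℚ U] [AddCommGroup U'] [Module ℚ U'] :
    ∃ e : ((EinvOFalg ⊗[ℚ] U) ⊗[OF] (EinvOFalg ⊗[ℚ] U')) ≃ₗ[OF]
        (EinvOFalg ⊗[ℚ] (U ⊗[ℚ] U')),
      ∀ (a b : EinvOFalg) (v : U) (v' : U'),
        e ((a ⊗ₜ[ℚ] v) ⊗ₜ[OF] (b ⊗ₜ[ℚ] v')) = (a * b) ⊗ₜ[ℚ] (v ⊗ₜ[ℚ] v') := by
  refine ⟨LinearEquiv.ofLinear fwd bwd ?_ ?_, ?_⟩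
  · apply LinearMap.ext
    intro z
    simp only [LinearMap.coe_comp, Function.comp_apply, LinearMap.id_apply]
    induction z using TensorProduct.induction_on with
    | zero => simp
    | tmul a w =>
        induction w using TensorProduct.induction_on with
        | zero => simp [TensorProduct.tmul_zero]
        | tmul v v' =>
            rw [bwd_apply, Gmul_symm_tmul, backAdd_tmul, fwd_tmul, Gmul_tmul, mul_one]
        | add w1 w2 h1 h2 =>
            rw [TensorProduct.tmul_add, map_add, map_add, h1, h2]
    | add z1 z2 h1 h2 => rw [map_add, map_add, h1, h2]
  · apply TensorProduct.ext'
    intro x y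
    simp only [LinearMap.coe_comp, Function.comp_apply, LinearMap.id_apply]
    rw [fwd_tmul, bwd_apply, LinearEquiv.symm_apply_apply, backAdd_tmul]
  · intro a b v v'
    simp only [LinearEquiv.ofLinear_apply]
    rw [fwd_tmul, Gmul_tmul]

end
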